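/- Let n ≥ 1 and k_1, …, k_n ≥ 1 be integers, and define f(s) = n − s − Σ_{l=1}^n 1/(1 + (s−1) + … + (s−1)^{k_l}) for s ≥ 1. Suppose the star-shaped graph with branch lengths k_1, …, k_n is neither a Dynkin graph (i.e., not: n ≤ 2, or n = 3 with branch-length multiset {1,1,m}, {1,2,2}, {1,2,3}, or {1,2,4}) nor an extended Dynkin graph (i.e., the multiset {k_1,…,k_n} is not {1,1,1,1}, {2,2,2}, {1,3,3}, or {1,2,5}). Then f(s) = 0 has exactly two solutions s_1, s_2 in [1, ∞), and they satisfy 1 < s_1 < 2 < s_2 < n. -/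

import Mathlib

open Finset Set

/-- The function `f(s) = n - s - ∑_{l=1}^n 1/(1 + (s-1) + … + (s-1)^{k_l})`
attached to the star-shaped graph with `n` branches of lengths `k 1, …, k n`. -/
noncomputable def starFun (n : ℕ) (k : Fin n → ℕ) (s : ℝ) : ℝ :=
  (n : ℝ) - s - ∑ l, (∑ j ∈ Finset.range (k l + 1), (s - 1) ^ j)⁻¹


private lemma sumA_mul (K : ℕ) (t : ℝ) :
    (∑ j ∈ range K, (j:ℝ) * t^j) * (t-1) = ((K:ℝ)-1) * t^K - (∑ j ∈ range K, t^j) + 1 := by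
  induction K with
  | zero => simp
  | succ m ih =>
    rw [sum_range_succ, sum_range_succ (fun j => t^j)]
    push_cast; linear_combination ih

private lemma sumB_mul (K : ℕ) (t : ℝ) :
    (∑ j ∈ range K, (j:ℝ)*((j:ℝ)-1) * t^j) * (t-1)
      = ((K:ℝ)-1)*((K:ℝ)-2) * t^K - 2*((∑ j ∈ range K, (j:ℝ)*t^j) - (∑ j ∈ range K, t^j) + 1) := by
  induction K with
  | zero => simp
  | succ m ih =>
    rw [sum_range_succ, sum_range_succ (fun j => (j:ℝ)*t^j), sum_range_succ (fun j => t^j)]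
    push_cast; linear_combination ih

private lemma sumId (K : ℕ) : (∑ j ∈ range K, (j:ℝ)) = K*((K:ℝ)-1)/2 := by
  induction K with
  | zero => simp
  | succ m ih => rw [sum_range_succ]; push_cast; linear_combination ih

private lemma sumJJ (K : ℕ) : (∑ j ∈ range K, (j:ℝ)*((j:ℝ)-1)) = K*((K:ℝ)-1)*((K:ℝ)-2)/3 := by
  induction K with
  | zero => simp
  | succ m ih => rw [sum_range_succ]; push_cast; linear_combination ih

private lemma vsum (K : ℕ) (t : ℝ) :
    ∑ i ∈ range (K-1), (t^(i+1) - 1) * (t^(K-1-i) - 1)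
      = ((K:ℝ)-1)*t^K + (K:ℝ) + 1 - 2 * ∑ j ∈ range K, t^j := by
  cases K with
  | zero => simp
  | succ m =>
    simp only [Nat.add_sub_cancel]
    have e1 : ∀ i ∈ range m, (t^(i+1) - 1) * (t^(m-i) - 1)
        = (t^(m+1) + 1) - t^(i+1) - t^(m-i) := by
      intro i hi
      have h : (i+1) + (m-i) = m+1 := by have := mem_range.1 hi; omega
      have h2 : t^(i+1) * t^(m-i) = t^(m+1) := by rw [← pow_add, h]
      linear_combination h2
    rw [sum_congr rfl e1]
    have e2 : ∑ i ∈ range m, t^(m-i) = ∑ i ∈ range m, t^(i+1) := by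
      rw [← sum_range_reflect (fun i => t^(i+1)) m]
      exact sum_congr rfl fun i hi => by have := mem_range.1 hi; congr 1; omega
    have e3 : ∑ i ∈ range m, t^(i+1) = (∑ j ∈ range (m+1), t^j) - 1 := by
      rw [Finset.sum_range_succ' (fun j => t^j) m]; simp
    rw [sum_sub_distrib, sum_sub_distrib, sum_const, e2, e3, card_range, nsmul_eq_mul]
    push_cast; ring

private lemma vnonneg (K : ℕ) {t : ℝ} (ht : 0 ≤ t) :
    0 ≤ ((K:ℝ)-1)*t^K + (K:ℝ) + 1 - 2 * ∑ j ∈ range K, t^j := by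
  rw [← vsum]
  refine sum_nonneg fun i _ => ?_
  rcases le_total 1 t with h | h
  · exact mul_nonneg (by nlinarith [one_le_pow₀ (n := i+1) h])
      (by nlinarith [one_le_pow₀ (n := K-1-i) h])
  · have h1 : t^(i+1) ≤ 1 := pow_le_one₀ ht h
    have h2 : t^(K-1-i) ≤ 1 := pow_le_one₀ ht h
    nlinarith

private lemma key_abstract (c X t p a b : ℝ) (hc : 0 ≤ c) (hX : 0 ≤ X) (ht : t ≠ 1)
    (h1 : p*(t-1) = X - 1)
    (h2 : a*(t-1) = (c-1)*X - p + 1)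
    (h3 : b*(t-1) = (c-1)*(c-2)*X - 2*(a - p + 1))
    (hv : 0 ≤ (c-1)*X + c + 1 - 2*p) :
    p * b ≤ 2 * a^2 := by
  have h0 : t - 1 ≠ 0 := sub_ne_zero.2 ht
  have hp : p = (X-1)/(t-1) := by rw [eq_div_iff h0]; exact h1
  have ha : a = ((c-1)*X - p + 1)/(t-1) := by rw [eq_div_iff h0]; exact h2
  have hb : b = ((c-1)*(c-2)*X - 2*(a - p + 1))/(t-1) := by rw [eq_div_iff h0]; exact h3
  have key : 2*a^2 - p*b = c * X * ((c-1)*X + c + 1 - 2*p) / (t-1)^2 := by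
    rw [hb, ha, hp]; field_simp; ring
  nlinarith [div_nonneg (mul_nonneg (mul_nonneg hc hX) hv) (sq_nonneg (t-1)), key]

private lemma sum_ineq (K : ℕ) {t : ℝ} (ht : 0 ≤ t) :
    (∑ j ∈ range K, t^j) * (∑ j ∈ range K, (j:ℝ)*((j:ℝ)-1)*t^j)
      ≤ 2 * (∑ j ∈ range K, (j:ℝ)*t^j)^2 := by
  by_cases h1 : t = 1
  · subst h1
    simp only [one_pow, mul_one, sum_const, card_range, nsmul_eq_mul]
    rw [sumId, sumJJ]
    rcases Nat.eq_zero_or_pos K with h | h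
    · subst h; norm_num
    · have hK : (1:ℝ) ≤ K := by exact_mod_cast h
      nlinarith [mul_nonneg (mul_nonneg (sq_nonneg ((K:ℝ))) (by linarith : (0:ℝ) ≤ (K:ℝ)-1))
        (by linarith : (0:ℝ) ≤ (K:ℝ)+1)]
  · exact key_abstract (K:ℝ) (t^K) t _ _ _ (Nat.cast_nonneg K) (pow_nonneg ht K) h1
      (geom_sum_mul t K) (sumA_mul K t) (sumB_mul K t) (vnonneg K ht)

private lemma geom_pos (K : ℕ) {t : ℝ} (ht : 0 ≤ t) : 0 < ∑ j ∈ range (K+1), t^j := by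
  have h1 : (1:ℝ) ≤ ∑ j ∈ range (K+1), t^j := by
    have := Finset.single_le_sum (f := fun j => t^j)
      (fun j _ => pow_nonneg ht j) (mem_range.2 (Nat.succ_pos K))
    simpa using this
  linarith

private lemma inv_geom_convex (K : ℕ) :
    ConvexOn ℝ (Set.Ici (0:ℝ)) (fun t => (∑ j ∈ range (K+1), t^j)⁻¹) := by
  set P : ℝ → ℝ := fun t => ∑ j ∈ range (K+1), t^j with hPdef
  set Q : ℝ → ℝ := fun t => ∑ j ∈ range (K+1), (j:ℝ) * t^(j-1) with hQdef
  set R : ℝ → ℝ := fun t => ∑ j ∈ range (K+1), (j:ℝ) * (((j-1:ℕ):ℝ) * t^(j-1-1)) with hRdef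
  have hPderiv : ∀ x : ℝ, HasDerivAt P (Q x) x := by
    intro x
    exact HasDerivAt.fun_sum fun j _ => hasDerivAt_pow j x
  have hQderiv : ∀ x : ℝ, HasDerivAt Q (R x) x := by
    intro x
    exact HasDerivAt.fun_sum fun j _ => (hasDerivAt_pow (j-1) x).const_mul (j:ℝ)
  have hPpos : ∀ x : ℝ, 0 ≤ x → 0 < P x := fun x hx => geom_pos K hx
  refine convexOn_of_hasDerivWithinAt2_nonneg (convex_Ici 0)
    (f' := fun t => -Q t / P t ^ 2)
    (f'' := fun t => (2 * P t * Q t ^ 2 - R t * P t ^ 2) / (P t ^ 2) ^ 2)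
    ?_ ?_ ?_ ?_
  · -- continuity
    have hPc : Continuous P := continuous_finset_sum _ fun j _ => continuous_pow j
    exact (hPc.continuousOn).inv₀ fun x hx => (hPpos x hx).ne'
  · intro x hx
    rw [interior_Ici] at hx
    exact ((hPderiv x).inv (hPpos x hx.le).ne').hasDerivWithinAt
  · intro x hx
    rw [interior_Ici] at hx
    have hd : HasDerivAt (fun t => -Q t / P t ^ 2)
        ((-R x * P x ^ 2 - (-Q x) * ((2:ℕ) * P x ^ (2-1) * Q x)) / (P x ^ 2) ^ 2) x :=
      HasDerivAt.div ((hQderiv x).neg) ((hPderiv x).pow 2) (pow_ne_zero 2 (hPpos x hx.le).ne')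
    have : ((-R x * P x ^ 2 - (-Q x) * ((2:ℕ) * P x ^ (2-1) * Q x)) / (P x ^ 2) ^ 2)
        = (2 * P x * Q x ^ 2 - R x * P x ^ 2) / (P x ^ 2) ^ 2 := by
      push_cast; ring
    rw [this] at hd
    exact hd.hasDerivWithinAt
  · intro x hx
    rw [interior_Ici] at hx
    have hx0 : (0:ℝ) < x := hx
    have hQA : Q x * x = ∑ j ∈ range (K+1), (j:ℝ) * x^j := by
      rw [hQdef]
      rw [Finset.sum_mul]
      refine sum_congr rfl fun j _ => ?_
      cases j with
      | zero => simp
      | succ m => rw [mul_assoc, ← pow_succ]; norm_num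
    have hRB : R x * x^2 = ∑ j ∈ range (K+1), (j:ℝ)*((j:ℝ)-1) * x^j := by
      rw [hRdef, Finset.sum_mul]
      refine sum_congr rfl fun j _ => ?_
      match j with
      | 0 => simp
      | 1 => simp
      | (m+2) =>
        have : (m+2) - 1 - 1 = m := rfl
        rw [this]
        have hc : (((m+2-1:ℕ)):ℝ) = (m:ℝ) + 1 := by push_cast; ring
        rw [hc]
        push_cast
        ring
    apply div_nonneg _ (sq_nonneg _)
    have hPx : 0 < P x := hPpos x hx0.le
    have hkey := sum_ineq (K+1) hx0.le
    have e : (2 * P x * Q x ^ 2 - R x * P x ^ 2) * x^2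
        = P x * (2 * (∑ j ∈ range (K+1), (j:ℝ)*x^j)^2
            - (∑ j ∈ range (K+1), x^j) * (∑ j ∈ range (K+1), (j:ℝ)*((j:ℝ)-1)*x^j)) := by
      rw [← hQA, ← hRB, hPdef]
      ring
    have ht2 : (0:ℝ) < x^2 := by positivity
    have h9 : 0 * x^2 ≤ (2 * P x * Q x ^ 2 - R x * P x ^ 2) * x^2 := by
      rw [e, zero_mul]
      exact mul_nonneg hPx.le (by linarith [hkey])
    exact le_of_mul_le_mul_right (by simpa using h9) ht2



private lemma inv_geom_convex' (K : ℕ) :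
    ConvexOn ℝ (Set.Ici (1:ℝ)) (fun s => (∑ j ∈ range (K+1), (s-1)^j)⁻¹) := by
  have h := inv_geom_convex K
  refine ⟨convex_Ici 1, fun x hx y hy a b ha hb hab => ?_⟩
  have hx' : x - 1 ∈ Ici (0:ℝ) := by simpa using hx
  have hy' : y - 1 ∈ Ici (0:ℝ) := by simpa using hy
  have e : a • x + b • y - 1 = a • (x-1) + b • (y-1) := by
    simp only [smul_eq_mul]; nlinarith [hab]
  simp only []
  show (∑ j ∈ range (K+1), (a • x + b • y - 1)^j)⁻¹ ≤ _
  rw [e]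
  exact h.2 hx' hy' ha hb hab

private lemma starFun_concave (n : ℕ) (k : Fin n → ℕ) :
    ConcaveOn ℝ (Set.Ici (1:ℝ)) (starFun n k) := by
  refine ⟨convex_Ici 1, fun x hx y hy a b ha hb hab => ?_⟩
  have hsum : ∀ l : Fin n,
      (∑ j ∈ range (k l + 1), (a • x + b • y - 1)^j)⁻¹
        ≤ a * (∑ j ∈ range (k l + 1), (x-1)^j)⁻¹ + b * (∑ j ∈ range (k l + 1), (y-1)^j)⁻¹ := by
    intro l
    have := (inv_geom_convex' (k l)).2 hx hy ha hb hab
    simpa [smul_eq_mul] using this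
  have hS : ∑ l, (∑ j ∈ range (k l + 1), (a • x + b • y - 1)^j)⁻¹
      ≤ a * (∑ l, (∑ j ∈ range (k l + 1), (x-1)^j)⁻¹)
        + b * (∑ l, (∑ j ∈ range (k l + 1), (y-1)^j)⁻¹) := by
    rw [Finset.mul_sum, Finset.mul_sum, ← Finset.sum_add_distrib]
    exact Finset.sum_le_sum fun l _ => hsum l
  simp only [starFun, smul_eq_mul] at *
  have hn' : a*(n:ℝ) + b*(n:ℝ) = (n:ℝ) := by rw [← add_mul, hab, one_mul]
  nlinarith [hS]

private lemma starFun_one (n : ℕ) (k : Fin n → ℕ) (hk : ∀ l, 1 ≤ k l) :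
    starFun n k 1 = -1 := by
  have h : ∀ l : Fin n, (∑ j ∈ range (k l + 1), ((1:ℝ) - 1)^j)⁻¹ = 1 := by
    intro l
    have : (∑ j ∈ range (k l + 1), ((1:ℝ) - 1)^j) = 1 := by
      rw [show ((1:ℝ)-1) = 0 by ring]
      rw [Finset.sum_range_succ']
      simp
    rw [this]; norm_num
  simp only [starFun]
  rw [Finset.sum_congr rfl fun l _ => h l]
  simp

private lemma starFun_two (n : ℕ) (k : Fin n → ℕ) :
    starFun n k 2 = (n:ℝ) - 2 - ∑ l, ((k l : ℝ) + 1)⁻¹ := by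
  simp only [starFun]
  congr 1
  refine Finset.sum_congr rfl fun l _ => ?_
  rw [show ((2:ℝ)-1) = 1 by ring]
  simp

private lemma invbound (q m : ℕ) (h : q ≤ m) : ((m:ℝ)+1)⁻¹ ≤ ((q:ℝ)+1)⁻¹ := by
  apply inv_anti₀ (by positivity)
  have : (q:ℝ) ≤ m := by exact_mod_cast h
  linarith

private lemma three_sorted (a b c : ℕ) (ha : 1 ≤ a) (hab : a ≤ b) (hbc : b ≤ c)
    (h11 : ∀ m : ℕ, 1 ≤ m → ({a, b, c} : Multiset ℕ) ≠ {1, 1, m})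
    (h122 : ({a,b,c} : Multiset ℕ) ≠ {1,2,2})
    (h123 : ({a,b,c} : Multiset ℕ) ≠ {1,2,3})
    (h124 : ({a,b,c} : Multiset ℕ) ≠ {1,2,4})
    (h125 : ({a,b,c} : Multiset ℕ) ≠ {1,2,5})
    (h222 : ({a,b,c} : Multiset ℕ) ≠ {2,2,2})
    (h133 : ({a,b,c} : Multiset ℕ) ≠ {1,3,3}) :
    ((a:ℝ)+1)⁻¹ + ((b:ℝ)+1)⁻¹ + ((c:ℝ)+1)⁻¹ < 1 := by
  have hc1 : 1 ≤ c := le_trans ha (le_trans hab hbc)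
  by_cases ha1 : a = 1
  · subst ha1
    have hb2 : 2 ≤ b := by
      rcases Nat.lt_or_ge b 2 with h | h
      · exfalso; have : b = 1 := by omega
        subst this; exact (h11 c hc1) rfl
      · exact h
    by_cases hb2' : b = 2
    · subst hb2'
      have hc6 : 6 ≤ c := by
        rcases Nat.lt_or_ge c 6 with h | h
        · exfalso; interval_cases c
          · exact h122 rfl
          · exact h123 rfl
          · exact h124 rfl
          · exact h125 rfl
        · exact h
      have C := invbound 6 c hc6
      push_cast at C ⊢; norm_num at C ⊢; linarith
    · have hb3 : 3 ≤ b := by omega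
      by_cases hb3' : b = 3
      · subst hb3'
        have hc4 : 4 ≤ c := by
          rcases Nat.lt_or_ge c 4 with h | h
          · exfalso; have : c = 3 := by omega
            subst this; exact h133 rfl
          · exact h
        have C := invbound 4 c hc4
        push_cast at C ⊢; norm_num at C ⊢; linarith
      · have hb4 : 4 ≤ b := by omega
        have B := invbound 4 b hb4
        have C := invbound 4 c (le_trans hb4 hbc)
        push_cast at B C ⊢; norm_num at B C ⊢; linarith
  · have ha2 : 2 ≤ a := by omega
    have hc3 : 3 ≤ c := by
      rcases Nat.lt_or_ge c 3 with h | h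
      · exfalso
        have h1 : a = 2 := by omega
        have h2 : b = 2 := by omega
        have h3 : c = 2 := by omega
        subst h1; subst h2; subst h3; exact h222 rfl
      · exact h
    have A := invbound 2 a ha2
    have B := invbound 2 b (le_trans ha2 hab)
    have C := invbound 3 c hc3
    push_cast at A B C ⊢; norm_num at A B C ⊢; linarith

private lemma mswap12 (x y z : ℕ) : ({x, y, z} : Multiset ℕ) = {y, x, z} :=
  Multiset.cons_swap x y {z}

private lemma mswap23 (x y z : ℕ) : ({x, y, z} : Multiset ℕ) = {x, z, y} := by
  simp only [Multiset.insert_eq_cons]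
  exact congrArg _ (Multiset.cons_swap y z {})

private lemma three_lt (a b c : ℕ) (ha : 1 ≤ a) (hb : 1 ≤ b) (hc : 1 ≤ c)
    (h11 : ∀ m : ℕ, 1 ≤ m → ({a, b, c} : Multiset ℕ) ≠ {1, 1, m})
    (h122 : ({a,b,c} : Multiset ℕ) ≠ {1,2,2})
    (h123 : ({a,b,c} : Multiset ℕ) ≠ {1,2,3})
    (h124 : ({a,b,c} : Multiset ℕ) ≠ {1,2,4})
    (h125 : ({a,b,c} : Multiset ℕ) ≠ {1,2,5})
    (h222 : ({a,b,c} : Multiset ℕ) ≠ {2,2,2})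
    (h133 : ({a,b,c} : Multiset ℕ) ≠ {1,3,3}) :
    ((a:ℝ)+1)⁻¹ + ((b:ℝ)+1)⁻¹ + ((c:ℝ)+1)⁻¹ < 1 := by
  -- reduce to the sorted case
  rcases le_total a b with h1 | h1 <;> rcases le_total b c with h2 | h2
  · exact three_sorted a b c ha h1 h2 h11 h122 h123 h124 h125 h222 h133
  · rcases le_total a c with h3 | h3
    · -- a ≤ c ≤ b
      have hm : ({a,c,b} : Multiset ℕ) = {a,b,c} := mswap23 a c b ▸ rfl
      have hm' : ({a,b,c} : Multiset ℕ) = {a,c,b} := (mswap23 a b c)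
      have := three_sorted a c b ha h3 h2 (fun m hm1 => by rw [← hm']; exact h11 m hm1)
        (by rw [← hm']; exact h122) (by rw [← hm']; exact h123) (by rw [← hm']; exact h124)
        (by rw [← hm']; exact h125) (by rw [← hm']; exact h222) (by rw [← hm']; exact h133)
      linarith
    · -- c ≤ a ≤ b
      have hm' : ({a,b,c} : Multiset ℕ) = {c,a,b} := by
        rw [mswap23 a b c, mswap12 a c b]
      have := three_sorted c a b hc h3 h1 (fun m hm1 => by rw [← hm']; exact h11 m hm1)
        (by rw [← hm']; exact h122) (by rw [← hm']; exact h123) (by rw [← hm']; exact h124)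
        (by rw [← hm']; exact h125) (by rw [← hm']; exact h222) (by rw [← hm']; exact h133)
      linarith
  · rcases le_total a c with h3 | h3
    · -- b ≤ a ≤ c
      have hm' : ({a,b,c} : Multiset ℕ) = {b,a,c} := mswap12 a b c
      have := three_sorted b a c hb h1 h3 (fun m hm1 => by rw [← hm']; exact h11 m hm1)
        (by rw [← hm']; exact h122) (by rw [← hm']; exact h123) (by rw [← hm']; exact h124)
        (by rw [← hm']; exact h125) (by rw [← hm']; exact h222) (by rw [← hm']; exact h133)
      linarith
    · -- b ≤ c ≤ a
      have hm' : ({a,b,c} : Multiset ℕ) = {b,c,a} := by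
        rw [mswap12 a b c, mswap23 b a c]
      have := three_sorted b c a hb h2 h3 (fun m hm1 => by rw [← hm']; exact h11 m hm1)
        (by rw [← hm']; exact h122) (by rw [← hm']; exact h123) (by rw [← hm']; exact h124)
        (by rw [← hm']; exact h125) (by rw [← hm']; exact h222) (by rw [← hm']; exact h133)
      linarith
  · -- c ≤ b, b ≤ a is wrong branch combination; here a ≤ b fails: c ≤ b ≤ a? no:
    -- this branch: b ≤ a (h1 : b ≤ a), c ≤ b (h2 : c ≤ b): so c ≤ b ≤ a
    have hm' : ({a,b,c} : Multiset ℕ) = {c,b,a} := by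
      rw [mswap23 a b c, mswap12 a c b, mswap23 c a b]
    have := three_sorted c b a hc h2 h1 (fun m hm1 => by rw [← hm']; exact h11 m hm1)
      (by rw [← hm']; exact h122) (by rw [← hm']; exact h123) (by rw [← hm']; exact h124)
      (by rw [← hm']; exact h125) (by rw [← hm']; exact h222) (by rw [← hm']; exact h133)
    linarith



private lemma starFun_continuous (n : ℕ) (k : Fin n → ℕ) :
    ContinuousOn (starFun n k) (Set.Ici 1) := by
  unfold starFun
  apply ContinuousOn.sub
  · exact (continuous_const.sub continuous_id).continuousOn
  · apply continuousOn_finset_sum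
    intro l _
    apply ContinuousOn.inv₀
    · apply Continuous.continuousOn
      exact continuous_finset_sum _ fun j _ => (continuous_id.sub continuous_const).pow j
    · intro x hx
      have hx0 : (0:ℝ) ≤ x - 1 := by simpa using hx
      exact (geom_pos (k l) hx0).ne'

private lemma concave_pos {f : ℝ → ℝ} (hf : ConcaveOn ℝ (Set.Ici 1) f) {x y z : ℝ}
    (hx : 1 ≤ x) (hxy : x < y) (hyz : y < z) (hfx : 0 ≤ f x) (hfz : 0 ≤ f z)
    (hor : 0 < f x ∨ 0 < f z) : 0 < f y := by
  have hzx : 0 < z - x := by linarith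
  set a : ℝ := (z - y)/(z - x) with hadef
  set b : ℝ := (y - x)/(z - x) with hbdef
  have ha : 0 < a := div_pos (by linarith) hzx
  have hb : 0 < b := div_pos (by linarith) hzx
  have hab : a + b = 1 := by
    rw [hadef, hbdef, ← add_div, show z - y + (y - x) = z - x by ring, div_self hzx.ne']
  have hcomb : a * x + b * z = y := by
    rw [hadef, hbdef]
    field_simp
    ring
  have hz1 : (1:ℝ) ≤ z := by linarith
  have h := hf.2 (mem_Ici.2 hx) (mem_Ici.2 hz1) ha.le hb.le hab
  rw [smul_eq_mul, smul_eq_mul, smul_eq_mul, smul_eq_mul, hcomb] at h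
  rcases hor with h1 | h1
  · nlinarith [mul_pos ha h1, mul_nonneg hb.le hfz]
  · nlinarith [mul_pos hb h1, mul_nonneg ha.le hfx]

theorem stmt_2 (n : ℕ) (hn : 1 ≤ n) (k : Fin n → ℕ) (hk : ∀ l, 1 ≤ k l)
    (hNotDynkin : ¬(n ≤ 2 ∨ (n = 3 ∧
      ((∃ m : ℕ, 1 ≤ m ∧ (List.ofFn k : Multiset ℕ) = {1, 1, m}) ∨
        (List.ofFn k : Multiset ℕ) = {1, 2, 2} ∨
        (List.ofFn k : Multiset ℕ) = {1, 2, 3} ∨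
        (List.ofFn k : Multiset ℕ) = {1, 2, 4}))))
    (hNotExt : ¬((List.ofFn k : Multiset ℕ) = {1, 1, 1, 1} ∨
      (List.ofFn k : Multiset ℕ) = {2, 2, 2} ∨
      (List.ofFn k : Multiset ℕ) = {1, 3, 3} ∨
      (List.ofFn k : Multiset ℕ) = {1, 2, 5})) :
    ∃ s₁ s₂ : ℝ, 1 < s₁ ∧ s₁ < 2 ∧ 2 < s₂ ∧ s₂ < n ∧
      starFun n k s₁ = 0 ∧ starFun n k s₂ = 0 ∧
      ∀ s : ℝ, 1 ≤ s → starFun n k s = 0 → s = s₁ ∨ s = s₂ := by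
  obtain ⟨hn2, hD3⟩ := not_or.1 hNotDynkin
  have hn3 : 3 ≤ n := by omega
  have hE1111 : (List.ofFn k : Multiset ℕ) ≠ {1,1,1,1} := fun h => hNotExt (Or.inl h)
  have hE222 : (List.ofFn k : Multiset ℕ) ≠ {2,2,2} := fun h => hNotExt (Or.inr (Or.inl h))
  have hE133 : (List.ofFn k : Multiset ℕ) ≠ {1,3,3} := fun h => hNotExt (Or.inr (Or.inr (Or.inl h)))
  have hE125 : (List.ofFn k : Multiset ℕ) ≠ {1,2,5} := fun h => hNotExt (Or.inr (Or.inr (Or.inr h)))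
  -- f(2) > 0
  have h2pos : 0 < starFun n k 2 := by
    rw [starFun_two]
    rw [show (0:ℝ) = (n:ℝ) - 2 - ((n:ℝ) - 2) by ring]
    apply sub_lt_sub_left
    rcases Nat.lt_or_ge n 5 with h5 | h5
    · interval_cases n
      · -- n = 3
        have hofn : (List.ofFn k : Multiset ℕ) = {k 0, k 1, k 2} := by
          simp [List.ofFn_succ]; rfl
        rw [hofn] at hD3 hE222 hE133 hE125
        have hD := fun h => hD3 ⟨rfl, h⟩
        have h11 : ∀ m : ℕ, 1 ≤ m → ({k 0, k 1, k 2} : Multiset ℕ) ≠ {1,1,m} :=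
          fun m hm h => hD (Or.inl ⟨m, hm, h⟩)
        have h122 := fun h => hD (Or.inr (Or.inl h))
        have h123 := fun h => hD (Or.inr (Or.inr (Or.inl h)))
        have h124 := fun h => hD (Or.inr (Or.inr (Or.inr h)))
        have key := three_lt (k 0) (k 1) (k 2) (hk 0) (hk 1) (hk 2)
          h11 h122 h123 h124 hE125 hE222 hE133
        rw [Fin.sum_univ_three]
        push_cast
        norm_num
        convert key using 2 <;> norm_num
      · -- n = 4
        have hofn : (List.ofFn k : Multiset ℕ) = {k 0, k 1, k 2, k 3} := by
          simp [List.ofFn_succ]; rfl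
        rw [hofn] at hE1111
        have hex : ∃ l, 2 ≤ k l := by
          by_contra hcon
          push_neg at hcon
          have hall : ∀ l, k l = 1 := fun l => by have := hk l; have := hcon l; omega
          exact hE1111 (by rw [hall 0, hall 1, hall 2, hall 3])
        obtain ⟨l₀, hl₀⟩ := hex
        have hsplit : ∑ l, ((k l : ℝ) + 1)⁻¹
            = ((k l₀ : ℝ)+1)⁻¹ + ∑ l ∈ univ.erase l₀, ((k l : ℝ) + 1)⁻¹ := by
          rw [← Finset.add_sum_erase _ _ (mem_univ l₀)]
        rw [hsplit]
        have h1 : ((k l₀ : ℝ)+1)⁻¹ ≤ 1/3 := by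
          have := invbound 2 (k l₀) hl₀
          push_cast at this; norm_num at this; linarith
        have h2 : ∑ l ∈ univ.erase l₀, ((k l : ℝ) + 1)⁻¹ ≤ ((univ.erase l₀).card : ℝ) * (1/2) := by
          rw [← nsmul_eq_mul]
          apply Finset.sum_le_card_nsmul
          intro l _
          have := invbound 1 (k l) (hk l)
          push_cast at this ⊢; norm_num at this ⊢; linarith
        have hcard : (univ.erase l₀).card = 3 := by
          rw [Finset.card_erase_of_mem (mem_univ l₀)]
          simp
        rw [hcard] at h2
        push_cast at h1 h2 ⊢
        norm_num at h1 h2 ⊢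
        linarith
    · -- n ≥ 5
      have h : ∑ l, ((k l : ℝ) + 1)⁻¹ ≤ (Finset.univ (α := Fin n)).card • ((1:ℝ)/2) := by
        apply Finset.sum_le_card_nsmul
        intro l _
        have := invbound 1 (k l) (hk l)
        push_cast at this ⊢; norm_num at this ⊢; linarith
      rw [Finset.card_univ, Fintype.card_fin, nsmul_eq_mul] at h
      have hn5 : (5:ℝ) ≤ (n:ℝ) := by exact_mod_cast h5
      linarith
  -- f(1) = -1 < 0, f(n) < 0
  have h1neg : starFun n k 1 = -1 := starFun_one n k hk
  have hnr : (3:ℝ) ≤ (n:ℝ) := by exact_mod_cast hn3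
  have hnneg : starFun n k (n:ℝ) < 0 := by
    unfold starFun
    have hpos : 0 < ∑ l, (∑ j ∈ Finset.range (k l + 1), ((n:ℝ) - 1) ^ j)⁻¹ := by
      apply Finset.sum_pos
      · intro l _
        exact inv_pos.2 (geom_pos (k l) (by linarith))
      · exact ⟨⟨0, by omega⟩, mem_univ _⟩
    linarith
  -- IVT for s₁
  have hcont := starFun_continuous n k
  obtain ⟨s₁, hs₁mem, hs₁⟩ : ∃ s₁ ∈ Ioo (1:ℝ) 2, starFun n k s₁ = 0 := by
    have h := intermediate_value_Ioo (by norm_num : (1:ℝ) ≤ 2)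
      (hcont.mono (Icc_subset_Ici_self))
    have h0 : (0:ℝ) ∈ Ioo (starFun n k 1) (starFun n k 2) := by
      constructor
      · rw [h1neg]; norm_num
      · exact h2pos
    obtain ⟨s₁, hmem, heq⟩ := h h0
    exact ⟨s₁, hmem, heq⟩
  obtain ⟨s₂, hs₂mem, hs₂⟩ : ∃ s₂ ∈ Ioo (2:ℝ) (n:ℝ), starFun n k s₂ = 0 := by
    have hsub : Icc (2:ℝ) (n:ℝ) ⊆ Ici 1 := fun x hx => by
      simp only [Set.mem_Icc] at hx; simp only [Set.mem_Ici]; linarith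
    have h := intermediate_value_Ioo' (by linarith : (2:ℝ) ≤ (n:ℝ)) (hcont.mono hsub)
    have h0 : (0:ℝ) ∈ Ioo (starFun n k (n:ℝ)) (starFun n k 2) := ⟨hnneg, h2pos⟩
    obtain ⟨s₂, hmem, heq⟩ := h h0
    exact ⟨s₂, hmem, heq⟩
  obtain ⟨hs₁1, hs₁2⟩ := hs₁mem
  obtain ⟨hs₂2, hs₂n⟩ := hs₂mem
  refine ⟨s₁, s₂, hs₁1, hs₁2, hs₂2, hs₂n, hs₁, hs₂, ?_⟩
  -- uniqueness
  intro s hs hs0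
  have hconc := starFun_concave n k
  by_contra hcon
  push_neg at hcon
  obtain ⟨hne1, hne2⟩ := hcon
  rcases lt_trichotomy s s₁ with h | h | h
  · -- s < s₁ < 2
    have := concave_pos hconc hs h hs₁2 (le_of_eq hs0.symm) h2pos.le (Or.inr h2pos)
    rw [hs₁] at this; exact lt_irrefl 0 this
  · exact hne1 h
  · rcases lt_trichotomy s 2 with h2 | h2 | h2
    · -- s₁ < s < 2
      have := concave_pos hconc (by linarith : (1:ℝ) ≤ s₁) h h2
        (le_of_eq hs₁.symm) h2pos.le (Or.inr h2pos)
      rw [hs0] at this; exact lt_irrefl 0 this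
    · rw [h2] at hs0; rw [hs0] at h2pos; exact lt_irrefl 0 h2pos
    · rcases lt_trichotomy s s₂ with h3 | h3 | h3
      · -- 2 < s < s₂
        have := concave_pos hconc (by norm_num : (1:ℝ) ≤ 2) h2 h3
          h2pos.le (le_of_eq hs₂.symm) (Or.inl h2pos)
        rw [hs0] at this; exact lt_irrefl 0 this
      · exact hne2 h3
      · -- 2 < s₂ < s
        have := concave_pos hconc (by norm_num : (1:ℝ) ≤ 2) hs₂2 h3
          h2pos.le (le_of_eq hs0.symm) (Or.inl h2pos)
        rw [hs₂] at this; exact lt_irrefl 0 this
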